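/- Let H : ℝ → ℝ be continuous and coercive and F0 : ℝ → ℝ be continuous, non-increasing and semi-coercive. (i) If p ∈ χ⁺(R̄F0), then p⁺ > p, R̄F0 is constant equal to H(p) on (p, p⁺), H > H(p) on (p, p⁺), and moreover H(p⁺) = H(p) whenever p⁺ < +∞. (ii) If p ∈ χ⁻(R̲F0), then p⁻ < p, R̲F0 is constant equal to H(p) on (p⁻, p), H < H(p) on (p⁻, p), and H(p⁻) = H(p). -/

import Mathlib

open Set Filter

attribute [local instance] Classical.propDecidable

noncomputable section

/-- `H` is coercive: `H p → +∞` as `|p| → +∞`. -/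
def Coercive (H : ℝ → ℝ) : Prop := Tendsto H (cocompact ℝ) atTop

/-- `F` is semi-coercive: `F p → +∞` as `p → -∞`. -/
def SemiCoercive (F : ℝ → ℝ) : Prop := Tendsto F atBot atTop

/-- Sub-relaxation: `(R̲F)(p) = sup_{q ≥ p} min (F q) (H q)`. -/
def subR (H F : ℝ → ℝ) (p : ℝ) : ℝ := sSup ((fun q => min (F q) (H q)) '' Ici p)

/-- Super-relaxation: `(R̄F)(p) = inf_{q ≤ p} max (F q) (H q)`. -/
def supR (H F : ℝ → ℝ) (p : ℝ) : ℝ := sInf ((fun q => max (F q) (H q)) '' Iic p)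

/-- Relaxation operator: `R̲F` where `F ≥ H`, `R̄F` where `F ≤ H`. -/
def relax (H F : ℝ → ℝ) (p : ℝ) : ℝ := if H p ≤ F p then subR H F p else supR H F p

/-- `p` is a negative characteristic point of `F` relative to `H`. -/
def negChar (H F : ℝ → ℝ) (p : ℝ) : Prop :=
  H p = F p ∧ ∃ ε > 0, ∀ q ∈ Ioo (p - ε) p, H q < H p

/-- `p` is a positive characteristic point of `F` relative to `H`. -/
def posChar (H F : ℝ → ℝ) (p : ℝ) : Prop :=
  H p = F p ∧ ∃ ε > 0, ∀ q ∈ Ioo p (p + ε), H p < H q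

/-- The upper point `p⁺ ∈ ℝ ∪ {+∞}` associated with `p` and `H`. -/
def upperPt (H : ℝ → ℝ) (p : ℝ) : EReal :=
  if ∀ ε > 0, ∃ q, p < q ∧ q < p + ε ∧ H q ≤ H p then (p : EReal)
  else sSup ((fun q : ℝ => (q : EReal)) '' {q : ℝ | p < q ∧ ∀ r ∈ Ioo p q, H p < H r})

/-- The lower point `p⁻` associated with `p` and `H`. -/
def lowerPt (H : ℝ → ℝ) (p : ℝ) : ℝ :=
  if ∀ ε > 0, ∃ q, p - ε < q ∧ q < p ∧ H p ≤ H q then p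
  else sInf {q : ℝ | q < p ∧ ∀ r ∈ Ioo q p, H r < H p}

/-- `p` is a positive limiter point of `F`. -/
def posLimiter (H F : ℝ → ℝ) (p : ℝ) : Prop :=
  (p : EReal) < upperPt H p ∧ F p ≤ H p ∧
    ∀ q : ℝ, H q < H p → F q ≤ H q →
      {r : ℝ | lowerPt H q < r ∧ (r : EReal) < upperPt H q} ∩
        {r : ℝ | p < r ∧ (r : EReal) < upperPt H p} = ∅

/-- `p` is a negative limiter point of `F`. -/
def negLimiter (H F : ℝ → ℝ) (p : ℝ) : Prop :=
  lowerPt H p < p ∧ H p ≤ F p ∧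
    ∀ q : ℝ, H q ≤ F q → H p < H q →
      {r : ℝ | lowerPt H q < r ∧ (r : EReal) < upperPt H q} ∩ Ioo (lowerPt H p) p = ∅

/-- The Godunov flux associated with `H`. -/
def godunov (H : ℝ → ℝ) (q p : ℝ) : ℝ :=
  if p ≤ q then sSup (H '' Icc p q) else sInf (H '' Icc q p)

/-- The lower (set-valued) Godunov semi-flux `G̲(q,p)`, as a subset of the extended reals. -/
def subG (H : ℝ → ℝ) (q p : ℝ) : Set EReal :=
  if q < p then {⊥}
  else if q = p then Iic ((H p : ℝ) : EReal)
  else {((godunov H q p : ℝ) : EReal)}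

/-- The upper (set-valued) Godunov semi-flux `Ḡ(q,p)`, as a subset of the extended reals. -/
def supG (H : ℝ → ℝ) (q p : ℝ) : Set EReal :=
  if q < p then {((godunov H q p : ℝ) : EReal)}
  else if q = p then Ici ((H p : ℝ) : EReal)
  else {⊤}

/-- Characteristic points and the semi-relaxation operators. -/
theorem characteristic_points_and_semi_relaxations (H F0 : ℝ → ℝ)
    (hH : Continuous H) (hHc : Coercive H)
    (hF : Continuous F0) (hFa : Antitone F0) (hFs : SemiCoercive F0) (p : ℝ) :
    (posChar H (supR H F0) p →
      (p : EReal) < upperPt H p ∧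
      (∀ q : ℝ, p < q → (q : EReal) < upperPt H p → supR H F0 q = H p ∧ H p < H q) ∧
      (∀ r : ℝ, upperPt H p = (r : EReal) → H r = H p)) ∧
    (negChar H (subR H F0) p →
      lowerPt H p < p ∧
      (∀ q ∈ Ioo (lowerPt H p) p, subR H F0 q = H p ∧ H q < H p) ∧
      H (lowerPt H p) = H p) := by
  have hB : Tendsto H atBot atTop := by
    apply hHc.mono_left
    rw [cocompact_eq_atBot_atTop]
    exact le_sup_left
  have supRne : ∀ q : ℝ, ((fun r => max (F0 r) (H r)) '' Iic q).Nonempty :=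
    fun q => ⟨max (F0 q) (H q), q, self_mem_Iic, rfl⟩
  have supRbdd : ∀ q : ℝ, BddBelow ((fun r => max (F0 r) (H r)) '' Iic q) := by
    intro q
    refine ⟨F0 q, ?_⟩
    rintro x ⟨r, hr, rfl⟩
    exact le_trans (hFa hr) (le_max_left _ _)
  have subRne : ∀ q : ℝ, ((fun r => min (F0 r) (H r)) '' Ici q).Nonempty :=
    fun q => ⟨min (F0 q) (H q), q, self_mem_Ici, rfl⟩
  have subRbdd : ∀ q : ℝ, BddAbove ((fun r => min (F0 r) (H r)) '' Ici q) := by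
    intro q
    refine ⟨F0 q, ?_⟩
    rintro x ⟨r, hr, rfl⟩
    exact le_trans (min_le_left _ _) (hFa hr)
  constructor
  · rintro ⟨hpF, ε, hε, hloc⟩
    have hC : ¬ (∀ ε > 0, ∃ q, p < q ∧ q < p + ε ∧ H q ≤ H p) := by
      push_neg
      exact ⟨ε, hε, fun q h1 h2 => hloc q ⟨h1, h2⟩⟩
    have hup : upperPt H p =
        sSup ((fun q : ℝ => (q : EReal)) '' {q : ℝ | p < q ∧ ∀ r ∈ Ioo p q, H p < H r}) := by
      rw [upperPt, if_neg hC]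
    have hmemS : (p + ε) ∈ {q : ℝ | p < q ∧ ∀ r ∈ Ioo p q, H p < H r} :=
      ⟨by linarith, fun r hr => hloc r hr⟩
    have hub : ∀ {a : ℝ}, (a : EReal) < upperPt H p →
        ∃ q', (p < q' ∧ ∀ r ∈ Ioo p q', H p < H r) ∧ a < q' := by
      intro a ha
      rw [hup, lt_sSup_iff] at ha
      obtain ⟨x, ⟨q', hq', rfl⟩, hlt⟩ := ha
      exact ⟨q', hq', EReal.coe_lt_coe_iff.mp hlt⟩
    have goal1 : (p : EReal) < upperPt H p := by
      rw [hup]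
      exact lt_of_lt_of_le (EReal.coe_lt_coe_iff.mpr (by linarith)) (le_sSup ⟨p + ε, hmemS, rfl⟩)
    refine ⟨goal1, ?_, ?_⟩
    · intro q hpq hq
      obtain ⟨q', hq'S, hqq'⟩ := hub hq
      have key : ∀ r, p < r → r ≤ q → H p < H r :=
        fun r h1 h2 => hq'S.2 r ⟨h1, lt_of_le_of_lt h2 hqq'⟩
      refine ⟨le_antisymm ?_ ?_, key q hpq le_rfl⟩
      · rw [hpF]
        exact csInf_le_csInf (supRbdd q) (supRne p)
          (image_mono (Iic_subset_Iic.2 hpq.le))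
      · refine le_csInf (supRne q) ?_
        rintro b ⟨r, hr, rfl⟩
        rcases le_or_gt r p with h | h
        · calc H p = supR H F0 p := hpF
            _ ≤ max (F0 r) (H r) := csInf_le (supRbdd p) ⟨r, h, rfl⟩
        · exact le_trans (key r h hr).le (le_max_right _ _)
    · intro r hr
      have hubr : ∀ q ∈ {q : ℝ | p < q ∧ ∀ s ∈ Ioo p q, H p < H s}, q ≤ r := by
        intro q hq
        have h1 : (q : EReal) ≤ upperPt H p := by
          rw [hup]; exact le_sSup ⟨q, hq, rfl⟩
        rw [hr] at h1
        exact EReal.coe_le_coe_iff.mp h1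
      have hpr : p < r := lt_of_lt_of_le (by linarith) (hubr _ hmemS)
      have hlt : ∀ s ∈ Ioo p r, H p < H s := by
        intro s hs
        have h2 : (s : EReal) < upperPt H p := by
          rw [hr]; exact_mod_cast hs.2
        obtain ⟨q', hq'S, hsq'⟩ := hub h2
        exact hq'S.2 s ⟨hs.1, hsq'⟩
      have h1 : H p ≤ H r := by
        have ht : Tendsto H (nhdsWithin r (Iio r)) (nhds (H r)) :=
          (hH.tendsto r).mono_left nhdsWithin_le_nhds
        refine ge_of_tendsto ht ?_
        filter_upwards [Ioo_mem_nhdsLT_of_mem (⟨hpr, le_rfl⟩ : r ∈ Ioc p r)] with s hs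
        exact (hlt s hs).le
      have h2 : H r ≤ H p := by
        by_contra hcon
        push_neg at hcon
        have hopen : {s : ℝ | H p < H s} ∈ nhds r :=
          (isOpen_lt continuous_const hH).mem_nhds hcon
        rw [Metric.mem_nhds_iff] at hopen
        obtain ⟨δ, hδ, hball⟩ := hopen
        rw [Real.ball_eq_Ioo] at hball
        have hrd : ((r - δ : ℝ) : EReal) < upperPt H p := by
          rw [hr]; exact_mod_cast (by linarith : r - δ < r)
        obtain ⟨q', hq'S, hq'2⟩ := hub hrd
        have htS : r + δ/2 ∈ {q : ℝ | p < q ∧ ∀ s ∈ Ioo p q, H p < H s} := by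
          refine ⟨by linarith, fun s hs => ?_⟩
          rcases lt_or_ge s q' with h | h
          · exact hq'S.2 s ⟨hs.1, h⟩
          · exact hball ⟨by linarith [hs.2], by linarith [hs.2]⟩
        have := hubr _ htS
        linarith
      linarith
  · rintro ⟨hpF, ε, hε, hloc⟩
    have hC : ¬ (∀ ε > 0, ∃ q, p - ε < q ∧ q < p ∧ H p ≤ H q) := by
      push_neg
      exact ⟨ε, hε, fun q h1 h2 => hloc q ⟨h1, h2⟩⟩
    have hlow : lowerPt H p = sInf {q : ℝ | q < p ∧ ∀ r ∈ Ioo q p, H r < H p} := by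
      rw [lowerPt, if_neg hC]
    have hmemT : p - ε ∈ {q : ℝ | q < p ∧ ∀ r ∈ Ioo q p, H r < H p} :=
      ⟨by linarith, fun r hr => hloc r hr⟩
    have hbT : BddBelow {q : ℝ | q < p ∧ ∀ r ∈ Ioo q p, H r < H p} := by
      obtain ⟨m, hm⟩ := eventually_atBot.mp (hB.eventually (eventually_ge_atTop (H p + 1)))
      refine ⟨min m (p - 1), ?_⟩
      intro q hq
      by_contra hqm
      push_neg at hqm
      have h1 : min m (p - 1) ∈ Ioo q p :=
        ⟨hqm, lt_of_le_of_lt (min_le_right _ _) (by linarith)⟩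
      have h2 := hq.2 _ h1
      have h3 := hm (min m (p - 1)) (min_le_left _ _)
      linarith
    have hlb' : ∀ {a : ℝ}, sInf {q : ℝ | q < p ∧ ∀ r ∈ Ioo q p, H r < H p} < a →
        ∃ q', (q' < p ∧ ∀ r ∈ Ioo q' p, H r < H p) ∧ q' < a := by
      intro a ha
      obtain ⟨q', hq', h2⟩ := exists_lt_of_csInf_lt ⟨_, hmemT⟩ ha
      exact ⟨q', hq', h2⟩
    have goal1 : lowerPt H p < p := by
      rw [hlow]
      exact lt_of_le_of_lt (csInf_le hbT hmemT) (by linarith)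
    refine ⟨goal1, ?_, ?_⟩
    · intro q hq
      rw [hlow] at hq
      obtain ⟨q', hq'T, hq'q⟩ := hlb' hq.1
      have key : ∀ r, q ≤ r → r < p → H r < H p :=
        fun r h1 h2 => hq'T.2 r ⟨lt_of_lt_of_le hq'q h1, h2⟩
      refine ⟨le_antisymm ?_ ?_, key q le_rfl hq.2⟩
      · refine csSup_le (subRne q) ?_
        rintro b ⟨r, hr, rfl⟩
        rcases le_or_gt p r with h | h
        · calc min (F0 r) (H r) ≤ subR H F0 p := le_csSup (subRbdd p) ⟨r, h, rfl⟩
            _ = H p := hpF.symm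
        · exact le_trans (min_le_right _ _) (key r hr h).le
      · rw [hpF]
        exact csSup_le_csSup (subRbdd q) (subRne p)
          (image_mono (Ici_subset_Ici.2 hq.2.le))
    · rw [hlow]
      set l := sInf {q : ℝ | q < p ∧ ∀ r ∈ Ioo q p, H r < H p} with hl
      have hlp : l < p := lt_of_le_of_lt (csInf_le hbT hmemT) (by linarith)
      have hlt : ∀ s ∈ Ioo l p, H s < H p := by
        intro s hs
        obtain ⟨q', hq'T, hq's⟩ := hlb' hs.1
        exact hq'T.2 s ⟨hq's, hs.2⟩
      have h1 : H l ≤ H p := by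
        have ht : Tendsto H (nhdsWithin l (Ioi l)) (nhds (H l)) :=
          (hH.tendsto l).mono_left nhdsWithin_le_nhds
        refine le_of_tendsto ht ?_
        filter_upwards [Ioo_mem_nhdsGT_of_mem (⟨le_rfl, hlp⟩ : l ∈ Ico l p)] with s hs
        exact (hlt s hs).le
      have h2 : H p ≤ H l := by
        by_contra hcon
        push_neg at hcon
        have hopen : {s : ℝ | H s < H p} ∈ nhds l :=
          (isOpen_lt hH continuous_const).mem_nhds hcon
        rw [Metric.mem_nhds_iff] at hopen
        obtain ⟨δ, hδ, hball⟩ := hopen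
        rw [Real.ball_eq_Ioo] at hball
        obtain ⟨q', hq'T, hq'2⟩ := hlb' (by linarith : l < l + δ)
        have htT : l - δ/2 ∈ {q : ℝ | q < p ∧ ∀ r ∈ Ioo q p, H r < H p} := by
          refine ⟨by linarith, fun s hs => ?_⟩
          rcases lt_or_ge q' s with h | h
          · exact hq'T.2 s ⟨h, hs.2⟩
          · exact hball ⟨by linarith [hs.1], by linarith⟩
        have hle := csInf_le hbT htT
        rw [← hl] at hle
        linarith
      exact le_antisymm h1 h2
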